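/- arXiv:2306.14779 — 8 statements merged into one kernel-verified Lean document; each statement's English description precedes it below -/
import Mathlib

section
/- For every natural number n there exists a finite set F of clauses over n Boolean variables with cardinality exactly 3^n - 2^n and an assignment a : Fin n → Bool satisfying every clause of F; hence the bound 3^n - 2^n in the final point of satisfiability is attained. -/
/-- The bound `3^n - 2^n` (final point of satisfiability) is attained: there is a
finite set of clauses over `n` variables of that cardinality that is satisfiable. -/
theorem final_point_attained (n : ℕ) :
    ∃ F : Finset (Fin n → Option Bool),
      (∀ c ∈ F, c ≠ fun _ => none) ∧
      F.card = 3 ^ n - 2 ^ n ∧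
      ∃ a : Fin n → Bool, ∀ c ∈ F, ∃ i, c i = some (a i) := by
  classical
  refine ⟨Finset.univ.filter (fun c => ∃ i, c i = some true), ?_, ?_, fun _ => true, ?_⟩
  · intro c hc h
    simp only [Finset.mem_filter] at hc
    obtain ⟨i, hi⟩ := hc.2
    rw [h] at hi
    simp at hi
  · have htot : (Finset.univ : Finset (Fin n → Option Bool)).card = 3 ^ n := by
      simp [Fintype.card_fun]
    have hcomp :
        (Finset.univ.filter (fun c : Fin n → Option Bool =>
          ¬ ∃ i, c i = some true)).card = 2 ^ n := by
      have : (Finset.univ.filter (fun c : Fin n → Option Bool =>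
          ¬ ∃ i, c i = some true)).card = (Finset.univ : Finset (Fin n → Bool)).card := by
        apply Finset.card_bij' (fun c _ => fun i => decide (c i = none))
          (fun b _ => fun i => if b i then none else some false)
        · intro c hc; exact Finset.mem_univ _
        · intro b hb
          simp only [Finset.mem_filter, Finset.mem_univ, true_and, not_exists]
          intro i
          cases h : b i <;> simp [h]
        · intro c hc
          simp only [Finset.mem_filter, not_exists] at hc
          funext i
          have := hc.2 i
          cases h : c i with
          | none => simp [h]
          | some b => cases b <;> simp [h] <;> simp [h] at this
        · intro b hb
          funext i
          cases h : b i <;> simp [h]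
      rw [this]; simp
    have key : (Finset.univ.filter (fun c : Fin n → Option Bool => ∃ i, c i = some true)).card
        + (Finset.univ.filter (fun c : Fin n → Option Bool => ¬ ∃ i, c i = some true)).card
        = (Finset.univ : Finset (Fin n → Option Bool)).card :=
      Finset.card_filter_add_card_filter_not _
    rw [htot, hcomp] at key
    exact Nat.eq_sub_of_add_eq key
  · intro c hc
    simp only [Finset.mem_filter] at hc
    exact hc.2
end

section
/- Let n ≥ 1 and let a, b : Fin n → Bool be any two distinct truth assignments. Then the number of clauses over n Boolean variables that are satisfied by both a and b is at most 3^n - 2^n - 2^(n-1). -/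
open Finset in
lemma aux_cardA (n : ℕ) (v : Fin n → Bool) :
    (univ.filter (fun c : Fin n → Option Bool => ∀ i, c i ≠ some (v i))).card = 2 ^ n := by
  classical
  rw [← Fintype.card_subtype]
  rw [Fintype.card_congr (Equiv.subtypePiEquivPi
    (p := fun i (x : Option Bool) => x ≠ some (v i))), Fintype.card_pi]
  have h : ∀ i, Fintype.card {x : Option Bool // x ≠ some (v i)} = 2 := by
    intro i; cases v i <;> decide
  simp [h]

open Finset in
lemma aux_cardAB (n : ℕ) (a b : Fin n → Bool) (j : Fin n) (hj : a j ≠ b j) :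
    (univ.filter (fun c : Fin n → Option Bool =>
      ∀ i, c i ≠ some (a i) ∧ c i ≠ some (b i))).card ≤ 2 ^ (n - 1) := by
  classical
  rw [← Fintype.card_subtype]
  rw [Fintype.card_congr (Equiv.subtypePiEquivPi
    (p := fun i (x : Option Bool) => x ≠ some (a i) ∧ x ≠ some (b i))), Fintype.card_pi]
  calc ∏ i, Fintype.card {x : Option Bool // x ≠ some (a i) ∧ x ≠ some (b i)}
      ≤ ∏ i, (if i = j then 1 else 2) := by
        apply Finset.prod_le_prod'
        intro i _
        by_cases hi : i = j
        · subst hi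
          simp only [if_pos rfl]
          revert hj; cases a i <;> cases b i <;> decide
        · rw [if_neg hi]
          cases a i <;> cases b i <;> decide
    _ = 2 ^ (n - 1) := by
        rw [← Finset.mul_prod_erase univ _ (mem_univ j), if_pos rfl, one_mul]
        rw [Finset.prod_congr rfl (fun i hi => if_neg (Finset.ne_of_mem_erase hi))]
        rw [Finset.prod_const, Finset.card_erase_of_mem (mem_univ j), Finset.card_univ,
          Fintype.card_fin]

open Finset in
/-- For any two distinct assignments `a ≠ b` over `n ≥ 1` variables, the number of
clauses satisfied by both is at most `3^n - 2^n - 2^(n-1)`. -/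
theorem doubly_satisfied_count_le (n : ℕ) (hn : 1 ≤ n) (a b : Fin n → Bool)
    (hab : a ≠ b) :
    Fintype.card {c : Fin n → Option Bool //
      c ≠ (fun _ => none) ∧ (∃ i, c i = some (a i)) ∧ (∃ i, c i = some (b i))}
      ≤ 3 ^ n - 2 ^ n - 2 ^ (n - 1) := by
  classical
  obtain ⟨j, hj⟩ := Function.ne_iff.mp hab
  let S := univ.filter (fun c : Fin n → Option Bool =>
      c ≠ (fun _ => none) ∧ (∃ i, c i = some (a i)) ∧ (∃ i, c i = some (b i)))
  let A := univ.filter (fun c : Fin n → Option Bool => ∀ i, c i ≠ some (a i))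
  let B := univ.filter (fun c : Fin n → Option Bool => ∀ i, c i ≠ some (b i))
  have hdisj : Disjoint S (A ∪ B) := by
    rw [Finset.disjoint_left]
    intro c hc hc'
    simp only [S, mem_filter, mem_univ, true_and] at hc
    obtain ⟨-, ⟨i, hi⟩, ⟨i', hi'⟩⟩ := hc
    rcases Finset.mem_union.mp hc' with h | h
    · exact (mem_filter.mp h).2 i hi
    · exact (mem_filter.mp h).2 i' hi'
  have htot : S.card + (A ∪ B).card ≤ 3 ^ n := by
    rw [← Finset.card_union_of_disjoint hdisj]
    calc (S ∪ (A ∪ B)).card ≤ Fintype.card (Fin n → Option Bool) :=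
          Finset.card_le_univ _
      _ = 3 ^ n := by simp [Fintype.card_fun]
  have hunion : (A ∪ B).card + (A ∩ B).card = A.card + B.card :=
    Finset.card_union_add_card_inter A B
  have hAB : (A ∩ B).card ≤ 2 ^ (n - 1) := by
    have he : A ∩ B = univ.filter (fun c : Fin n → Option Bool =>
        ∀ i, c i ≠ some (a i) ∧ c i ≠ some (b i)) := by
      ext c
      simp [A, B, forall_and]
    rw [he]; exact aux_cardAB n a b j hj
  have hA : A.card = 2 ^ n := aux_cardA n a
  have hB : B.card = 2 ^ n := aux_cardA n b
  have h2 : 2 ^ (n - 1) + 2 ^ (n - 1) = 2 ^ n := by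
    have hn' : n - 1 + 1 = n := by omega
    calc 2 ^ (n - 1) + 2 ^ (n - 1) = 2 ^ (n - 1 + 1) := by ring
      _ = 2 ^ n := by rw [hn']
  have key : S.card ≤ 3 ^ n - 2 ^ n - 2 ^ (n - 1) := by omega
  have hScard : Fintype.card {c : Fin n → Option Bool //
      c ≠ (fun _ => none) ∧ (∃ i, c i = some (a i)) ∧ (∃ i, c i = some (b i))} = S.card := by
    rw [Fintype.card_subtype]
  rw [hScard]
  exact key
end

section
/- Let n ≥ 1 and let a, b : Fin n → Bool be two truth assignments that differ in exactly k variables (the set {i : a i ≠ b i} has cardinality k, with k ≥ 1). Then the number of clauses over n Boolean variables satisfied by both a and b is exactly 3^n - 2^(n+1) + 2^(n-k). -/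
/-- If two assignments `a`, `b` over `n ≥ 1` variables differ in exactly `k ≥ 1`
variables, then the number of clauses satisfied by both is exactly
`3^n - 2^(n+1) + 2^(n-k)` (as an integer). -/
theorem doubly_satisfied_count_general (n k : ℕ) (hn : 1 ≤ n) (hk : 1 ≤ k)
    (a b : Fin n → Bool)
    (hab : (Finset.univ.filter fun i : Fin n => a i ≠ b i).card = k) :
    (Fintype.card {c : Fin n → Option Bool //
      c ≠ (fun _ => none) ∧ (∃ i, c i = some (a i)) ∧ (∃ i, c i = some (b i))} : ℤ)
      = 3 ^ n - 2 ^ (n + 1) + 2 ^ (n - k) := by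
  classical
  have hkn : k ≤ n := by
    rw [← hab]
    simpa using Finset.card_filter_le Finset.univ (fun i : Fin n => a i ≠ b i)
  set A : Finset (Fin n → Option Bool) :=
    Finset.univ.filter (fun c => ∀ i, c i ≠ some (a i)) with hA
  set B : Finset (Fin n → Option Bool) :=
    Finset.univ.filter (fun c => ∀ i, c i ≠ some (b i)) with hB
  have cardOB : Fintype.card (Option Bool) = 3 := by decide
  have hAcard : A.card = 2 ^ n := by
    have h1 : A = Fintype.piFinset (fun i => Finset.univ.filter (· ≠ some (a i))) := by
      ext c
      simp [hA, Fintype.mem_piFinset]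
    rw [h1, Fintype.card_piFinset]
    have h2 : ∀ i, (Finset.univ.filter (· ≠ some (a i))).card = 2 := by
      intro i
      cases ha : a i <;> simp [ha] <;> decide
    simp [h2]
  have hBcard : B.card = 2 ^ n := by
    have h1 : B = Fintype.piFinset (fun i => Finset.univ.filter (· ≠ some (b i))) := by
      ext c
      simp [hB, Fintype.mem_piFinset]
    rw [h1, Fintype.card_piFinset]
    have h2 : ∀ i, (Finset.univ.filter (· ≠ some (b i))).card = 2 := by
      intro i
      cases hb : b i <;> simp [hb] <;> decide
    simp [h2]
  have hABcard : (A ∩ B).card = 2 ^ (n - k) := by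
    have h1 : A ∩ B = Fintype.piFinset
        (fun i => Finset.univ.filter (fun o => o ≠ some (a i) ∧ o ≠ some (b i))) := by
      ext c
      simp [hA, hB, Fintype.mem_piFinset, forall_and]
    rw [h1, Fintype.card_piFinset]
    have h2 : ∀ i, (Finset.univ.filter
        (fun o => o ≠ some (a i) ∧ o ≠ some (b i))).card = if a i = b i then 2 else 1 := by
      intro i
      cases ha : a i <;> cases hb : b i <;> simp [ha, hb] <;> decide
    have h3 : (Finset.univ.filter (fun i : Fin n => a i = b i)).card = n - k := by
      have h4 := Finset.card_filter_add_card_filter_not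
        (s := Finset.univ) (p := fun i : Fin n => a i = b i)
      have h5 : (Finset.univ.filter (fun i : Fin n => ¬ a i = b i)).card = k := hab
      rw [h5, Finset.card_univ, Fintype.card_fin] at h4
      omega
    calc ∏ i, (Finset.univ.filter
          (fun o => o ≠ some (a i) ∧ o ≠ some (b i))).card
        = ∏ i, (if a i = b i then 2 else 1) := Finset.prod_congr rfl (fun i _ => h2 i)
      _ = 2 ^ (n - k) := by
          rw [Finset.prod_ite, Finset.prod_const, Finset.prod_const, one_pow, mul_one, h3]
  have hcard : Fintype.card {c : Fin n → Option Bool //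
      c ≠ (fun _ => none) ∧ (∃ i, c i = some (a i)) ∧ (∃ i, c i = some (b i))}
      = (Finset.univ.filter (fun c : Fin n → Option Bool =>
          (∃ i, c i = some (a i)) ∧ (∃ i, c i = some (b i)))).card := by
    rw [Fintype.card_subtype]
    congr 1
    apply Finset.filter_congr
    intro c _
    constructor
    · rintro ⟨_, h1, h2⟩; exact ⟨h1, h2⟩
    · rintro ⟨⟨i, hi⟩, h2⟩
      refine ⟨?_, ⟨i, hi⟩, h2⟩
      intro h
      rw [h] at hi
      simp at hi
  have hP : (Finset.univ.filter (fun c : Fin n → Option Bool =>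
      (∃ i, c i = some (a i)) ∧ (∃ i, c i = some (b i)))) = Finset.univ \ (A ∪ B) := by
    ext c
    simp [hA, hB, not_or, not_forall]
  have hunion := Finset.card_union_add_card_inter A B
  rw [hAcard, hBcard, hABcard] at hunion
  have hle : (A ∪ B).card ≤ 3 ^ n := by
    calc (A ∪ B).card ≤ Fintype.card (Fin n → Option Bool) := Finset.card_le_univ _
      _ = 3 ^ n := by rw [Fintype.card_fun, cardOB, Fintype.card_fin]
  have hPcard : (Finset.univ.filter (fun c : Fin n → Option Bool =>
      (∃ i, c i = some (a i)) ∧ (∃ i, c i = some (b i)))).card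
      = 3 ^ n - (A ∪ B).card := by
    rw [hP, Finset.card_sdiff_of_subset (Finset.subset_univ _), Finset.card_univ,
      Fintype.card_fun, cardOB, Fintype.card_fin]
  rw [hcard, hPcard]
  have hu : ((A ∪ B).card : ℤ) = 2 ^ n + 2 ^ n - 2 ^ (n - k) := by
    have := congrArg (fun m : ℕ => (m : ℤ)) hunion
    push_cast at this
    linarith
  rw [Nat.cast_sub hle, hu]
  push_cast
  rw [pow_succ]
  ring
end

section
/- Let n ≥ 1 and let F be a finite set of clauses over n Boolean variables. If the cardinality of F is strictly greater than 3^n - 2^n - 2^(n-1), then F has at most one satisfying truth assignment: any two assignments a, b : Fin n → Bool each satisfying every clause of F must be equal. -/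
lemma card_avoid_one (u : Bool) :
    Fintype.card {x : Option Bool // x ≠ some u} = 2 := by
  cases u <;> decide

lemma card_avoid_two_le (u v : Bool) :
    Fintype.card {x : Option Bool // x ≠ some u ∧ x ≠ some v} ≤ 2 := by
  cases u <;> cases v <;> decide

lemma card_avoid_two_ne (u v : Bool) (h : u ≠ v) :
    Fintype.card {x : Option Bool // x ≠ some u ∧ x ≠ some v} = 1 := by
  cases u <;> cases v <;> simp_all <;> decide

/-- If a finite set `F` of clauses over `n ≥ 1` Boolean variables has more than
`3^n - 2^n - 2^(n-1)` clauses, then `F` has at most one satisfying assignment. -/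
theorem at_most_one_sat_of_card_gt (n : ℕ) (hn : 1 ≤ n)
    (F : Finset (Fin n → Option Bool))
    (hF : ∀ c ∈ F, c ≠ fun _ => none)
    (hcard : 3 ^ n - 2 ^ n - 2 ^ (n - 1) < F.card) :
    ∀ a b : Fin n → Bool,
      (∀ c ∈ F, ∃ i, c i = some (a i)) → (∀ c ∈ F, ∃ i, c i = some (b i)) →
      a = b := by
  intro a b ha hb
  by_contra hab
  obtain ⟨i0, hi0⟩ : ∃ i, a i ≠ b i := by
    by_contra h
    push_neg at h
    exact hab (funext h)
  classical
  set SA : Finset (Fin n → Option Bool) :=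
    Finset.univ.filter (fun c => ∀ i, c i ≠ some (a i)) with hSA
  set SB : Finset (Fin n → Option Bool) :=
    Finset.univ.filter (fun c => ∀ i, c i ≠ some (b i)) with hSB
  set S : Finset (Fin n → Option Bool) :=
    Finset.univ.filter (fun c => (∃ i, c i = some (a i)) ∧ (∃ i, c i = some (b i))) with hS
  have hFS : F ⊆ S := by
    intro c hc
    simp only [hS, Finset.mem_filter, Finset.mem_univ, true_and]
    exact ⟨ha c hc, hb c hc⟩
  have hcardSA : SA.card = 2 ^ n := by
    rw [hSA, ← Fintype.card_subtype]
    rw [Fintype.card_congr (Equiv.subtypePiEquivPi (p := fun i x => x ≠ some (a i)))]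
    simp [Fintype.card_pi, card_avoid_one]
  have hcardSB : SB.card = 2 ^ n := by
    rw [hSB, ← Fintype.card_subtype]
    rw [Fintype.card_congr (Equiv.subtypePiEquivPi (p := fun i x => x ≠ some (b i)))]
    simp [Fintype.card_pi, card_avoid_one]
  have hinter : (SA ∩ SB).card ≤ 2 ^ (n - 1) := by
    have : SA ∩ SB =
        Finset.univ.filter (fun c => ∀ i, c i ≠ some (a i) ∧ c i ≠ some (b i)) := by
      ext c
      simp [hSA, hSB, forall_and, Finset.mem_filter]
    rw [this, ← Fintype.card_subtype,
      Fintype.card_congr (Equiv.subtypePiEquivPi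
        (p := fun i x => x ≠ some (a i) ∧ x ≠ some (b i))),
      Fintype.card_pi]
    calc ∏ i, Fintype.card {x : Option Bool // x ≠ some (a i) ∧ x ≠ some (b i)}
        = Fintype.card {x : Option Bool // x ≠ some (a i0) ∧ x ≠ some (b i0)} *
          ∏ i ∈ Finset.univ.erase i0,
            Fintype.card {x : Option Bool // x ≠ some (a i) ∧ x ≠ some (b i)} :=
          (Finset.mul_prod_erase Finset.univ _ (Finset.mem_univ i0)).symm
      _ ≤ 1 * ∏ i ∈ Finset.univ.erase i0, 2 := by
          apply Nat.mul_le_mul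
          · exact le_of_eq (card_avoid_two_ne _ _ hi0)
          · exact Finset.prod_le_prod' (fun i _ => card_avoid_two_le _ _)
      _ = 2 ^ (n - 1) := by
          rw [one_mul, Finset.prod_const, Finset.card_erase_of_mem (Finset.mem_univ i0),
            Finset.card_univ, Fintype.card_fin]
  have hScompl : S = (SA ∪ SB)ᶜ := by
    ext c
    simp only [hS, hSA, hSB, Finset.mem_filter, Finset.mem_univ, true_and,
      Finset.mem_compl, Finset.mem_union, not_or]
    push_neg
    tauto
  have htotal : Fintype.card (Fin n → Option Bool) = 3 ^ n := by
    simp [Fintype.card_fun]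
  have hcardS : S.card = 3 ^ n - (SA ∪ SB).card := by
    rw [hScompl, Finset.card_compl, htotal]
  have hunion : (SA ∪ SB).card + (SA ∩ SB).card = SA.card + SB.card :=
    Finset.card_union_add_card_inter SA SB
  have hFScard : F.card ≤ S.card := Finset.card_le_card hFS
  have hple : 2 ^ n = 2 * 2 ^ (n - 1) := by
    rw [← pow_succ']; congr 1; omega
  have h1 : 2 ^ n + 2 ^ (n - 1) ≤ (SA ∪ SB).card := by omega
  have h2 : S.card ≤ 3 ^ n - (2 ^ n + 2 ^ (n - 1)) := by
    rw [hcardS]; exact Nat.sub_le_sub_left h1 _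
  rw [← Nat.sub_sub] at h2
  exact Nat.lt_irrefl _ (lt_of_lt_of_le hcard (hFScard.trans h2))
end

section
/- For every natural number n ≥ 2 there exists a finite set F of clauses over n Boolean variables with cardinality exactly 3^n - 2^n - 2^(n-1) together with two distinct assignments a ≠ b, each satisfying every clause of F; hence the bound in the last point of double satisfiability is attained. -/
set_option maxHeartbeats 1000000

lemma double_sat_aux_neg (m cu : ℕ) (key : cu + 2 ^ m = 2 ^ (m+1) + 2 ^ (m+1)) :
    cu = 2 ^ (m+1) + 2 ^ (m+1) - 2 ^ m := by omega

lemma double_sat_aux_card (m x y : ℕ) (hm : 1 ≤ m)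
    (hsplit : x + y = 3 ^ (m+1)) (hneg : y = 2 ^ (m+1) + 2 ^ (m+1) - 2 ^ m) :
    x = 3 ^ (m+1) - 2 ^ (m+1) - 2 ^ m := by
  have h23 : 2 ^ (m-1) ≤ 3 ^ (m-1) := Nat.pow_le_pow_left (by norm_num) _
  have hme : m + 1 = (m - 1) + 2 := by omega
  have hme' : m = (m - 1) + 1 := by omega
  have e1 : 2 ^ (m+1) = 4 * 2 ^ (m-1) := by rw [hme, pow_add]; ring
  have e2 : 3 ^ (m+1) = 9 * 3 ^ (m-1) := by rw [hme, pow_add]; ring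
  have e3 : 2 ^ m = 2 * 2 ^ (m-1) := by rw [hme', pow_succ]; exact Nat.mul_comm _ _
  omega

/-- For `n ≥ 2`, the bound `3^n - 2^n - 2^(n-1)` (last point of double satisfiability)
is attained: there is a finite set of clauses of that cardinality satisfied by two
distinct assignments. -/
theorem double_sat_point_attained (n : ℕ) (hn : 2 ≤ n) :
    ∃ F : Finset (Fin n → Option Bool),
      (∀ c ∈ F, c ≠ fun _ => none) ∧
      F.card = 3 ^ n - 2 ^ n - 2 ^ (n - 1) ∧
      ∃ a b : Fin n → Bool, a ≠ b ∧
        (∀ c ∈ F, ∃ i, c i = some (a i)) ∧ (∀ c ∈ F, ∃ i, c i = some (b i)) := by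
  classical
  obtain ⟨m, rfl⟩ : ∃ m, n = m + 1 := ⟨n - 1, by omega⟩
  set a : Fin (m+1) → Bool := fun _ => false with ha
  set b : Fin (m+1) → Bool := fun i => decide (i.val = 0) with hb
  set F := Finset.univ.filter (fun c : Fin (m+1) → Option Bool =>
    (∃ i, c i = some (a i)) ∧ (∃ i, c i = some (b i))) with hF
  have hFmem : ∀ c, c ∈ F ↔ (∃ i, c i = some (a i)) ∧ (∃ i, c i = some (b i)) := by
    intro c; simp [hF]
  clear_value a b F
  refine ⟨F, ?_, ?_, a, b, ?_, ?_, ?_⟩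
  · intro c hc h
    obtain ⟨⟨i, hi⟩, -⟩ := (hFmem c).1 hc
    rw [h] at hi; simp at hi
  · -- cardinality
    have htot : (Finset.univ : Finset (Fin (m+1) → Option Bool)).card = 3 ^ (m+1) := by
      simp [Fintype.card_option]
    have hA : (Finset.univ.filter (fun c : Fin (m+1) → Option Bool =>
        ¬ ∃ i, c i = some (a i))).card = 2 ^ (m+1) := by
      have : (Finset.univ.filter (fun c : Fin (m+1) → Option Bool => ¬ ∃ i, c i = some (a i)))
          = Fintype.piFinset (fun _ : Fin (m+1) => ({none, some true} : Finset (Option Bool))) := by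
        ext c
        simp only [Finset.mem_filter, Finset.mem_univ, true_and, Fintype.mem_piFinset,
          not_exists, ha]
        constructor
        · intro h i; specialize h i; rcases hci : c i with _ | (_|_) <;> simp_all
        · intro h i; specialize h i; rcases hci : c i with _ | (_|_) <;> simp_all
      rw [this, Fintype.card_piFinset]
      simp
    have hB : (Finset.univ.filter (fun c : Fin (m+1) → Option Bool =>
        ¬ ∃ i, c i = some (b i))).card = 2 ^ (m+1) := by
      have : (Finset.univ.filter (fun c : Fin (m+1) → Option Bool => ¬ ∃ i, c i = some (b i)))
          = Fintype.piFinset (fun i : Fin (m+1) =>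
              if i.val = 0 then ({none, some false} : Finset (Option Bool))
              else ({none, some true} : Finset (Option Bool))) := by
        ext c
        simp only [Finset.mem_filter, Finset.mem_univ, true_and, Fintype.mem_piFinset,
          not_exists, hb]
        constructor
        · intro h i; specialize h i
          by_cases h0 : i.val = 0 <;> rcases hci : c i with _ | (_|_) <;> simp_all
        · intro h i; specialize h i
          by_cases h0 : i.val = 0 <;> rcases hci : c i with _ | (_|_) <;> simp_all
      rw [this, Fintype.card_piFinset]
      have : ∀ i : Fin (m+1), (if i.val = 0 then ({none, some false} : Finset (Option Bool))
          else ({none, some true} : Finset (Option Bool))).card = 2 := by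
        intro i; by_cases h0 : i.val = 0 <;> simp [h0]
      simp only [this]; simp
    have hAB : (Finset.univ.filter (fun c : Fin (m+1) → Option Bool =>
        (¬ ∃ i, c i = some (a i)) ∧ ¬ ∃ i, c i = some (b i))).card = 2 ^ m := by
      have heq : (Finset.univ.filter (fun c : Fin (m+1) → Option Bool =>
          (¬ ∃ i, c i = some (a i)) ∧ ¬ ∃ i, c i = some (b i)))
          = Fintype.piFinset (fun i : Fin (m+1) =>
              if i.val = 0 then ({none} : Finset (Option Bool))
              else ({none, some true} : Finset (Option Bool))) := by
        ext c
        simp only [Finset.mem_filter, Finset.mem_univ, true_and, Fintype.mem_piFinset,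
          not_exists, ha, hb]
        constructor
        · rintro ⟨h1, h2⟩ i; have := h1 i; have := h2 i
          by_cases h0 : i.val = 0 <;> rcases hci : c i with _ | (_|_) <;> simp_all
        · intro h
          constructor <;> intro i <;> have := h i <;>
            by_cases h0 : i.val = 0 <;> rcases hci : c i with _ | (_|_) <;> simp_all
      rw [heq, Fintype.card_piFinset, Fin.prod_univ_succ]
      have h1 : ∀ i : Fin m, ((if (Fin.succ i).val = 0 then ({none} : Finset (Option Bool))
          else ({none, some true} : Finset (Option Bool))).card) = 2 := by
        intro i
        rw [if_neg (by simp [Fin.val_succ])]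
        rfl
      rw [Finset.prod_congr rfl (fun i _ => h1 i), Finset.prod_const,
        if_pos (by simp), Finset.card_singleton, one_mul, Finset.card_univ, Fintype.card_fin]
    -- inclusion-exclusion
    have hsplit : F.card + (Finset.univ.filter (fun c : Fin (m+1) → Option Bool =>
        ¬ ((∃ i, c i = some (a i)) ∧ (∃ i, c i = some (b i))))).card = 3 ^ (m+1) := by
      rw [hF, Finset.card_filter_add_card_filter_not, htot]
    have hneg : (Finset.univ.filter (fun c : Fin (m+1) → Option Bool =>
        ¬ ((∃ i, c i = some (a i)) ∧ (∃ i, c i = some (b i))))).card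
        = 2 ^ (m+1) + 2 ^ (m+1) - 2 ^ m := by
      have h1 : (Finset.univ.filter (fun c : Fin (m+1) → Option Bool =>
          ¬ ((∃ i, c i = some (a i)) ∧ (∃ i, c i = some (b i)))))
          = (Finset.univ.filter (fun c : Fin (m+1) → Option Bool => ¬ ∃ i, c i = some (a i)))
            ∪ (Finset.univ.filter (fun c : Fin (m+1) → Option Bool => ¬ ∃ i, c i = some (b i))) := by
        rw [← Finset.filter_or]; apply Finset.filter_congr; intro c _; tauto
      have h2 : (Finset.univ.filter (fun c : Fin (m+1) → Option Bool => ¬ ∃ i, c i = some (a i)))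
            ∩ (Finset.univ.filter (fun c : Fin (m+1) → Option Bool => ¬ ∃ i, c i = some (b i)))
          = Finset.univ.filter (fun c : Fin (m+1) → Option Bool =>
            (¬ ∃ i, c i = some (a i)) ∧ ¬ ∃ i, c i = some (b i)) := by
        rw [← Finset.filter_and]
      have := Finset.card_union_add_card_inter
        (Finset.univ.filter (fun c : Fin (m+1) → Option Bool => ¬ ∃ i, c i = some (a i)))
        (Finset.univ.filter (fun c : Fin (m+1) → Option Bool => ¬ ∃ i, c i = some (b i)))
      rw [h2, hAB, hA, hB] at this
      rw [congrArg Finset.card h1]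
      exact double_sat_aux_neg m _ this
    simp only [Nat.add_sub_cancel]
    exact double_sat_aux_card m _ _ (Nat.succ_le_succ_iff.mp hn) hsplit hneg
  · intro h
    have := congrFun h ⟨0, by omega⟩
    simp [ha, hb] at this
  · intro c hc; exact ((hFmem c).1 hc).1
  · intro c hc; exact ((hFmem c).1 hc).2
end

section
/- Let n ≥ 1, let F be a finite set of clauses over n Boolean variables, and suppose some assignment a : Fin n → Bool satisfies every clause of F. If for some variable index i and polarity b the literal (i, b) appears in exactly 3^(n-1) clauses of F, then the complementary literal (i, ¬b) appears in at most 3^(n-1) - 2^(n-1) clauses of F. -/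
lemma card_fix (n : ℕ) (i : Fin n) (v : Option Bool) (t : Fin n → Finset (Option Bool)) :
    (Finset.univ.filter fun c : Fin n → Option Bool => c i = v ∧ ∀ j, j ≠ i → c j ∈ t j).card
      = ∏ j ∈ Finset.univ.erase i, (t j).card := by
  have heq : (Finset.univ.filter fun c : Fin n → Option Bool => c i = v ∧ ∀ j, j ≠ i → c j ∈ t j)
      = Fintype.piFinset (fun j => if j = i then {v} else t j) := by
    ext c
    simp only [Finset.mem_filter, Finset.mem_univ, true_and, Fintype.mem_piFinset]
    constructor
    · rintro ⟨h1, h2⟩ j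
      by_cases hj : j = i
      · subst hj; simp [h1]
      · simp [hj, h2 j hj]
    · intro h
      refine ⟨?_, fun j hj => ?_⟩
      · have := h i; simpa using this
      · have := h j; simpa [hj] using this
  rw [heq, Fintype.card_piFinset,
    ← Finset.prod_erase_mul _ _ (Finset.mem_univ i)]
  have h1 : (if i = i then ({v} : Finset (Option Bool)) else t i).card = 1 := by simp
  rw [h1, mul_one]
  exact Finset.prod_congr rfl fun j hj => by rw [if_neg (Finset.ne_of_mem_erase hj)]

/-- In a satisfiable finite set `F` of clauses over `n ≥ 1` variables, if the literal
`(i, b)` appears in exactly `3^(n-1)` clauses of `F`, then its complement `(i, ¬b)`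
appears in at most `3^(n-1) - 2^(n-1)` clauses of `F`. -/
theorem complementary_literal_bound (n : ℕ) (hn : 1 ≤ n)
    (F : Finset (Fin n → Option Bool))
    (hF : ∀ c ∈ F, c ≠ fun _ => none)
    (hsat : ∃ a : Fin n → Bool, ∀ c ∈ F, ∃ i, c i = some (a i))
    (i : Fin n) (b : Bool)
    (hlit : (F.filter fun c => c i = some b).card = 3 ^ (n - 1)) :
    (F.filter fun c => c i = some (!b)).card ≤ 3 ^ (n - 1) - 2 ^ (n - 1) := by
  classical
  obtain ⟨a, ha⟩ := hsat
  have hne : (Finset.univ.erase i).card = n - 1 := by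
    simp [Finset.card_erase_of_mem]
  -- card of all clauses with c i = v is 3^(n-1)
  have hall : ∀ v : Option Bool,
      (Finset.univ.filter fun c : Fin n → Option Bool => c i = v).card = 3 ^ (n - 1) := by
    intro v
    have : (Finset.univ.filter fun c : Fin n → Option Bool => c i = v)
        = Finset.univ.filter fun c : Fin n → Option Bool =>
            c i = v ∧ ∀ j, j ≠ i → c j ∈ (Finset.univ : Finset (Option Bool)) := by
      ext c; simp
    rw [this, card_fix, Finset.prod_congr rfl (fun j _ => by
      show (Finset.univ : Finset (Option Bool)).card = 3
      simp), Finset.prod_const, hne]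
  -- S = all clauses with literal (i,b); S ⊆ F
  set S := Finset.univ.filter fun c : Fin n → Option Bool => c i = some b with hSdef
  have hSF : S ⊆ F := by
    have hsub : F.filter (fun c => c i = some b) ⊆ S := by
      intro c hc
      simp only [hSdef, Finset.mem_filter, Finset.mem_univ, true_and]
      exact (Finset.mem_filter.mp hc).2
    have := Finset.eq_of_subset_of_card_le hsub (by rw [hall (some b), hlit])
    rw [← this]
    exact Finset.filter_subset _ _
  -- a i = b
  have haib : a i = b := by
    by_contra h
    set c0 : Fin n → Option Bool := fun j => if j = i then some b else some (!a j) with hc0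
    have hc0S : c0 ∈ S := by simp [hSdef, hc0]
    obtain ⟨j, hj⟩ := ha c0 (hSF hc0S)
    by_cases hji : j = i
    · subst hji
      simp only [hc0, if_pos rfl] at hj
      exact h (Option.some.inj hj).symm
    · simp only [hc0, if_neg hji] at hj
      have := Option.some.inj hj
      simp at this
  -- T = all clauses with literal (i, !b)
  set T := Finset.univ.filter fun c : Fin n → Option Bool => c i = some (!b) with hTdef
  -- B = clauses with literal (i, !b) unsatisfiable elsewhere by a
  set B := Finset.univ.filter fun c : Fin n → Option Bool =>
      c i = some (!b) ∧ ∀ j, j ≠ i → c j ≠ some (a j) with hBdef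
  have hBcard : B.card = 2 ^ (n - 1) := by
    have hmem : ∀ (x : Option Bool) (j : Fin n),
        x ∈ ({none, some (!a j)} : Finset (Option Bool)) ↔ x ≠ some (a j) := by
      intro x j
      cases x with
      | none => simp
      | some y =>
        simp only [Finset.mem_insert, Finset.mem_singleton, Option.some.injEq, reduceCtorEq,
          false_or, ne_eq]
        cases y <;> cases a j <;> simp
    have : B = Finset.univ.filter fun c : Fin n → Option Bool =>
        c i = some (!b) ∧ ∀ j, j ≠ i → c j ∈ ({none, some (!a j)} : Finset (Option Bool)) := by
      ext c
      simp only [hBdef, Finset.mem_filter, Finset.mem_univ, true_and]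
      constructor
      · rintro ⟨h1, h2⟩; exact ⟨h1, fun j hj => (hmem _ j).mpr (h2 j hj)⟩
      · rintro ⟨h1, h2⟩; exact ⟨h1, fun j hj => (hmem _ j).mp (h2 j hj)⟩
    rw [this, card_fix, Finset.prod_congr rfl (fun j _ => by
      show ({none, some (!a j)} : Finset (Option Bool)).card = 2
      simp), Finset.prod_const, hne]
  have hBT : B ⊆ T := by
    intro c hc
    simp only [hBdef, Finset.mem_filter] at hc
    simp [hTdef, hc.2.1]
  have hsub2 : F.filter (fun c => c i = some (!b)) ⊆ T \ B := by
    intro c hc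
    rw [Finset.mem_filter] at hc
    obtain ⟨hcF, hci⟩ := hc
    rw [Finset.mem_sdiff]
    constructor
    · simp [hTdef, hci]
    · intro hcB
      simp only [hBdef, Finset.mem_filter] at hcB
      obtain ⟨j, hj⟩ := ha c hcF
      by_cases hji : j = i
      · subst hji
        rw [hci, haib] at hj
        have := Option.some.inj hj
        simp at this
      · exact hcB.2.2 j hji hj
  calc (F.filter fun c => c i = some (!b)).card ≤ (T \ B).card := Finset.card_le_card hsub2
    _ = T.card - B.card := Finset.card_sdiff_of_subset hBT
    _ = 3 ^ (n - 1) - 2 ^ (n - 1) := by rw [hall (some (!b)), hBcard]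
end

section
/- For every natural number n and every truth assignment a : Fin n → Bool, and for every variable index i : Fin n, the number of clauses over n Boolean variables that contain variable i (in either polarity) and are satisfied by a is exactly 2·3^(n-1) - 2^(n-1). -/
/-- For `n ≥ 1`, any assignment `a` and any variable index `i`, the number of clauses
over `n` variables containing variable `i` (in either polarity) and satisfied by `a`
is exactly `2·3^(n-1) - 2^(n-1)`. -/
theorem satisfied_with_variable_count (n : ℕ) (hn : 1 ≤ n)
    (a : Fin n → Bool) (i : Fin n) :
    Fintype.card {c : Fin n → Option Bool //
        c ≠ (fun _ => none) ∧ c i ≠ none ∧ ∃ j, c j = some (a j)}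
      = 2 * 3 ^ (n - 1) - 2 ^ (n - 1) := by
  classical
  set pA : ∀ j : Fin n, Option Bool → Prop := fun j x => j = i → x ≠ none with hpA
  set pB : ∀ j : Fin n, Option Bool → Prop :=
    fun j x => x ≠ some (a j) ∧ (j = i → x ≠ none) with hpB
  have hA : Fintype.card {c : Fin n → Option Bool // ∀ j, pA j (c j)}
      = 2 * 3 ^ (n - 1) := by
    rw [Fintype.card_congr (Equiv.subtypePiEquivPi (p := pA)), Fintype.card_pi,
      ← Finset.mul_prod_erase Finset.univ _ (Finset.mem_univ i)]
    have h1 : Fintype.card {x : Option Bool // pA i x} = 2 := by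
      rw [Fintype.card_congr (Equiv.subtypeEquivRight (q := fun x => x ≠ none)
        (fun x => by simp [hpA]))]
      decide
    have h2 : ∀ j ∈ Finset.univ.erase i, Fintype.card {x : Option Bool // pA j x} = 3 := by
      intro j hj
      have hji : j ≠ i := (Finset.mem_erase.mp hj).1
      rw [Fintype.card_congr (Equiv.subtypeEquivRight (q := fun _ => True)
        (fun x => by simp [hpA, hji]))]
      rw [Fintype.card_congr (Equiv.subtypeUnivEquiv (fun _ => trivial))]
      decide
    rw [h1, Finset.prod_congr rfl h2, Finset.prod_const]
    simp [Finset.card_erase_of_mem]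
  have hB : Fintype.card {c : Fin n → Option Bool // ∀ j, pB j (c j)}
      = 2 ^ (n - 1) := by
    rw [Fintype.card_congr (Equiv.subtypePiEquivPi (p := pB)), Fintype.card_pi,
      ← Finset.mul_prod_erase Finset.univ _ (Finset.mem_univ i)]
    have h1 : Fintype.card {x : Option Bool // pB i x} = 1 := by
      rw [Fintype.card_congr (Equiv.subtypeEquivRight
        (q := fun x => x ≠ some (a i) ∧ x ≠ none) (fun x => by simp [hpB]))]
      cases h : a i <;> simp [h] <;> decide
    have h2 : ∀ j ∈ Finset.univ.erase i, Fintype.card {x : Option Bool // pB j x} = 2 := by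
      intro j hj
      have hji : j ≠ i := (Finset.mem_erase.mp hj).1
      rw [Fintype.card_congr (Equiv.subtypeEquivRight (q := fun x => x ≠ some (a j))
        (fun x => by simp [hpB, hji]))]
      cases h : a j <;> simp [h] <;> decide
    rw [h1, Finset.prod_congr rfl h2, Finset.prod_const]
    simp [Finset.card_erase_of_mem]
  rw [Fintype.card_subtype]
  have hsplit : (Finset.univ.filter fun c : Fin n → Option Bool =>
      c ≠ (fun _ => none) ∧ c i ≠ none ∧ ∃ j, c j = some (a j))
      = (Finset.univ.filter fun c => ∀ j, pA j (c j))
        \ (Finset.univ.filter fun c => ∀ j, pB j (c j)) := by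
    ext c
    simp only [Finset.mem_filter, Finset.mem_sdiff, Finset.mem_univ, true_and, hpA, hpB]
    constructor
    · rintro ⟨-, hci, j, hj⟩
      refine ⟨fun k hk => hk ▸ hci, fun hall => (hall j).1 hj⟩
    · rintro ⟨hall, hnot⟩
      have hci : c i ≠ none := hall i rfl
      push_neg at hnot
      obtain ⟨j, hj⟩ := hnot
      rcases Classical.em (c j = some (a j)) with h | h
      · exact ⟨fun hc => hci (by rw [hc]), hci, j, h⟩
      · obtain ⟨hji, hnone⟩ := hj h
        exact absurd (hji ▸ hnone) hci
  rw [hsplit, Finset.card_sdiff_of_subset]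
  · rw [← Fintype.card_subtype, ← Fintype.card_subtype, hA, hB]
  · intro c hc
    simp only [Finset.mem_filter, Finset.mem_univ, true_and] at hc ⊢
    exact fun j hji => (hc j).2 hji
end

section
/- For every natural number n and every truth assignment a : Fin n → Bool, every variable index i : Fin n, and every polarity b : Bool with b = a i, the number of clauses over n Boolean variables that contain the literal (i, b) and are satisfied by a is exactly 3^(n-1), while the number of clauses containing the complementary literal (i, ¬b) satisfied by a is exactly 3^(n-1) - 2^(n-1). -/
section aux
variable {n : ℕ} (a : Fin n → Bool) (i : Fin n)

lemma card_ne_aux : Fintype.card {j : Fin n // j ≠ i} = n - 1 := by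
  simp [Fintype.card_subtype_compl]

/-- equiv for clauses with fixed value at i -/
def eqFix (y : Option Bool) : {c : Fin n → Option Bool // c i = y} ≃
    ({j : Fin n // j ≠ i} → Option Bool) where
  toFun c j := c.1 j
  invFun g := ⟨fun j => if h : j = i then y else g ⟨j, h⟩, by simp⟩
  left_inv c := by
    apply Subtype.ext; funext j; dsimp; split
    · next h => subst h; exact c.2.symm
    · rfl
  right_inv g := by
    funext j; dsimp; split
    · exact absurd (by assumption) j.2
    · rfl

lemma card_fix_s19 (y : Option Bool) :
    Fintype.card {c : Fin n → Option Bool // c i = y} = 3 ^ (n - 1) := by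
  rw [Fintype.card_congr (eqFix i y)]
  simp [Fintype.card_fun, card_ne_aux]

end aux


/-- For `n ≥ 1`, an assignment `a`, a variable `i`, and the polarity `b = a i`:
exactly `3^(n-1)` clauses contain the literal `(i, b)` and are satisfied by `a`,
while exactly `3^(n-1) - 2^(n-1)` clauses contain the complementary literal `(i, ¬b)`
and are satisfied by `a`. -/
theorem satisfied_with_literal_count (n : ℕ) (hn : 1 ≤ n)
    (a : Fin n → Bool) (i : Fin n) (b : Bool) (hb : b = a i) :
    Fintype.card {c : Fin n → Option Bool //
        c ≠ (fun _ => none) ∧ c i = some b ∧ ∃ j, c j = some (a j)} = 3 ^ (n - 1) ∧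
    Fintype.card {c : Fin n → Option Bool //
        c ≠ (fun _ => none) ∧ c i = some (!b) ∧ ∃ j, c j = some (a j)}
      = 3 ^ (n - 1) - 2 ^ (n - 1) := by
  constructor
  · -- first part: condition reduces to c i = some b
    have e : {c : Fin n → Option Bool //
        c ≠ (fun _ => none) ∧ c i = some b ∧ ∃ j, c j = some (a j)} ≃
        {c : Fin n → Option Bool // c i = some b} :=
      Equiv.subtypeEquivRight (fun c => by
        constructor
        · rintro ⟨-, h, -⟩; exact h
        · intro h
          refine ⟨fun hc => by simp [hc] at h, h, ⟨i, by rw [h, hb]⟩⟩)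
    rw [Fintype.card_congr e, card_fix_s19 i]
  · -- second part
    have hne : (some (!b) : Option Bool) ≠ some (a i) := by
      rw [← hb]; simp
    have e : {c : Fin n → Option Bool //
        c ≠ (fun _ => none) ∧ c i = some (!b) ∧ ∃ j, c j = some (a j)} ≃
        {g : {j : Fin n // j ≠ i} → Option Bool // ∃ j, g j = some (a j.1)} := by
      refine {
        toFun := fun c => ⟨fun j => c.1 j, ?_⟩,
        invFun := fun g => ⟨fun j => if h : j = i then some (!b) else g.1 ⟨j, h⟩, ?_, ?_, ?_⟩,
        left_inv := ?_, right_inv := ?_ }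
      · obtain ⟨j, hj⟩ := c.2.2.2
        have hji : j ≠ i := by
          rintro rfl
          exact hne (c.2.2.1 ▸ hj)
        exact ⟨⟨j, hji⟩, hj⟩
      · intro hc
        have := congrFun hc i
        simp at this
      · simp
      · obtain ⟨j, hj⟩ := g.2
        exact ⟨j.1, by simp [j.2, hj]⟩
      · intro c
        apply Subtype.ext; funext j; dsimp; split
        · next h => subst h; exact c.2.2.1.symm
        · rfl
      · intro g
        apply Subtype.ext; funext j; dsimp
        split
        · exact absurd (by assumption) j.2
        · rfl
    rw [Fintype.card_congr e]
    have hcompl : Fintype.card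
        {g : {j : Fin n // j ≠ i} → Option Bool // ¬ ∃ j, g j = some (a j.1)} = 2 ^ (n - 1) := by
      have e2 : {g : {j : Fin n // j ≠ i} → Option Bool // ¬ ∃ j, g j = some (a j.1)} ≃
          ∀ j : {j : Fin n // j ≠ i}, {x : Option Bool // x ≠ some (a j.1)} :=
        (Equiv.subtypeEquivRight (fun g => by push_neg; rfl)).trans
          (Equiv.subtypePiEquivPi)
      rw [Fintype.card_congr e2, Fintype.card_pi]
      have : ∀ j : {j : Fin n // j ≠ i},
          Fintype.card {x : Option Bool // x ≠ some (a j.1)} = 2 := by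
        intro j
        rw [Fintype.card_subtype_compl, Fintype.card_subtype_eq]
        simp
      simp [this, card_ne_aux]
    have htot := Fintype.card_subtype_compl (fun g : {j : Fin n // j ≠ i} → Option Bool =>
      ∃ j, g j = some (a j.1))
    rw [hcompl] at htot
    have hle : Fintype.card {g : {j : Fin n // j ≠ i} → Option Bool // ∃ j, g j = some (a j.1)}
        ≤ Fintype.card ({j : Fin n // j ≠ i} → Option Bool) := Fintype.card_subtype_le _
    have hcard : Fintype.card ({j : Fin n // j ≠ i} → Option Bool) = 3 ^ (n - 1) := by
      simp [Fintype.card_fun, card_ne_aux]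
    simp only [hcard] at htot hle
    have h23 : 2 ^ (n - 1) ≤ 3 ^ (n - 1) := Nat.pow_le_pow_left (by norm_num) _
    generalize hX : Fintype.card
      {g : {j : Fin n // j ≠ i} → Option Bool // ∃ j, g j = some (a j.1)} = X at htot hle ⊢
    clear hX e hne hcompl hcard
    omega
end
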